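/- For the minimax affine estimation problem, the worst-case MSE proxy at δ satisfies ω'(δ)²/m + (ω(δ) - δω'(δ))²/4 ≥ ω(2/√m)²/8, provided the modulus ω is concave, nondecreasing, nonnegative, and ω' is a supergradient of ω at δ. -/

import Mathlib

/-- Lower bound for the worst-case MSE proxy: if `ω : (0,∞) → [0,∞)` is concave,
nondecreasing and nonnegative, with supergradient `ω' ≥ 0` at `δ > 0`, and `m ≥ 1`,
then `ω'²/m + (ω(δ) - δω')²/4 ≥ ω(2/√m)²/8`. -/
theorem stmt17 (ω : ℝ → ℝ) (δ ω' m : ℝ)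
    (hδ : 0 < δ) (hm : 1 ≤ m)
    (hnonneg : ∀ d : ℝ, 0 < d → 0 ≤ ω d)
    (hmono : MonotoneOn ω (Set.Ioi (0 : ℝ)))
    (hconc : ConcaveOn ℝ (Set.Ioi (0 : ℝ)) ω)
    (hω' : 0 ≤ ω')
    (hsuper : ∀ d : ℝ, 0 < d → ω d ≤ ω δ + ω' * (d - δ)) :
    ω (2 / Real.sqrt m) ^ 2 / 8 ≤ ω' ^ 2 / m + (ω δ - δ * ω') ^ 2 / 4 := by
  have hm0 : (0:ℝ) < m := lt_of_lt_of_le one_pos hm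
  have hs : Real.sqrt m * Real.sqrt m = m := Real.mul_self_sqrt hm0.le
  have hs0 : 0 < Real.sqrt m := Real.sqrt_pos.mpr hm0
  set t := 2 / Real.sqrt m with ht
  have ht0 : 0 < t := by positivity
  have hωt : 0 ≤ ω t := hnonneg t ht0
  have hb : ω t ≤ ω δ + ω' * (t - δ) := hsuper t ht0
  have hts : t * Real.sqrt m = 2 := by rw [ht]; field_simp [hs0.ne']
  have ht2 : t ^ 2 = 4 / m := by
    rw [ht, div_pow]
    rw [show Real.sqrt m ^ 2 = m by rw [sq]; exact hs]
    norm_num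
  have hab : 0 ≤ ω δ - δ * ω' + ω' * t := by nlinarith
  have h1 : ω t ^ 2 ≤ (ω δ - δ * ω' + ω' * t) ^ 2 := by
    apply pow_le_pow_left₀ hωt; linarith
  have h2 : (ω δ - δ * ω' + ω' * t) ^ 2 ≤ 2 * (ω δ - δ * ω') ^ 2 + 2 * ω' ^ 2 * t ^ 2 := by
    nlinarith [sq_nonneg (ω δ - δ * ω' - ω' * t)]
  have h3 : 2 * ω' ^ 2 * t ^ 2 = 8 * (ω' ^ 2 / m) := by
    rw [ht2]; field_simp; ring
  linarith
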